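/- The discrete Wigner function of a Hermitian matrix is real-valued: if ρ : Matrix (ZMod d) (ZMod d) ℂ satisfies ρᴴ = ρ, then for every u ∈ ZMod d × ZMod d, the imaginary part of trace(A_u * ρ) is 0. -/

import Mathlib

open Matrix Complex

/-- ω = exp(2πi/d). -/
noncomputable def omegaC (d : ℕ) : ℂ := Complex.exp (2 * Real.pi * Complex.I / d)

/-- The clock matrix `Z`, with `Z x x = ω ^ x.val`. -/
noncomputable def Zmat (d : ℕ) : Matrix (ZMod d) (ZMod d) ℂ :=
  Matrix.diagonal (fun x => omegaC d ^ x.val)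

/-- The shift matrix `X`, with `X x y = 1` iff `x = y + 1`. -/
noncomputable def Xmat (d : ℕ) : Matrix (ZMod d) (ZMod d) ℂ :=
  Matrix.of fun x y => if x = y + 1 then 1 else 0

/-- The Heisenberg–Weyl operator `T_a`. -/
noncomputable def TW (d : ℕ) [NeZero d] (a : ZMod d × ZMod d) : Matrix (ZMod d) (ZMod d) ℂ :=
  omegaC d ^ ((-((2 : ZMod d)⁻¹ * a.1 * a.2)).val) • (Zmat d ^ a.1.val * Xmat d ^ a.2.val)

/-- The phase point operator at the origin, `A_0 = (1/d) • ∑ a, T_a`. -/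
noncomputable def Apoint0 (d : ℕ) [NeZero d] : Matrix (ZMod d) (ZMod d) ℂ :=
  (1 / (d : ℂ)) • ∑ a : ZMod d × ZMod d, TW d a

/-- The phase point operator `A_u = T_u * A_0 * T_uᴴ`. -/
noncomputable def Apoint (d : ℕ) [NeZero d] (u : ZMod d × ZMod d) : Matrix (ZMod d) (ZMod d) ℂ :=
  TW d u * Apoint0 d * (TW d u)ᴴ

section aux
variable (d : ℕ) [NeZero d]

/-- e z = ω ^ z.val -/
noncomputable def eZ (z : ZMod d) : ℂ := omegaC d ^ z.val

lemma omega_pow_d : omegaC d ^ d = 1 := by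
  have := Complex.isPrimitiveRoot_exp d (NeZero.ne d)
  exact this.pow_eq_one

lemma omega_pow_nat (n : ℕ) : omegaC d ^ n = eZ d (n : ZMod d) := by
  unfold eZ
  rw [ZMod.val_natCast]
  conv_lhs => rw [← Nat.div_add_mod n d]
  rw [pow_add, pow_mul, omega_pow_d, one_pow, one_mul]

lemma eZ_add (z w : ZMod d) : eZ d (z + w) = eZ d z * eZ d w := by
  have h := omega_pow_nat d (z.val + w.val)
  rw [Nat.cast_add, ZMod.natCast_val, ZMod.natCast_val, ZMod.cast_id, ZMod.cast_id] at h
  rw [eZ, eZ, eZ, ← pow_add]; exact h.symm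

lemma eZ_zero : eZ d 0 = 1 := by simp [eZ, ZMod.val_zero]

lemma eZ_abs (z : ZMod d) : ‖eZ d z‖ = 1 := by
  unfold eZ omegaC
  rw [norm_pow, Complex.norm_exp]
  have : (2 * Real.pi * Complex.I / d).re = 0 := by
    simp [Complex.div_re]
  rw [this, Real.exp_zero, one_pow]

lemma eZ_conj (z : ZMod d) : (starRingEnd ℂ) (eZ d z) = eZ d (-z) := by
  have h1 : eZ d z * eZ d (-z) = 1 := by rw [← eZ_add]; simp [eZ_zero]
  have h2 : (starRingEnd ℂ) (eZ d z) = (eZ d z)⁻¹ := by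
    rw [← Complex.inv_eq_conj (eZ_abs d z)]
  rw [h2, inv_eq_of_mul_eq_one_right h1]

end aux

section main
variable (d : ℕ) [NeZero d]

lemma Xmat_pow_apply (m : ℕ) (x y : ZMod d) :
    (Xmat d ^ m) x y = if x = y + (m : ZMod d) then 1 else 0 := by
  induction m generalizing x y with
  | zero => simp [Matrix.one_apply]
  | succ m ih =>
    rw [pow_succ, Matrix.mul_apply]
    have hX : ∀ z, Xmat d z y = if z = y + 1 then 1 else 0 := fun z => rfl
    rw [Finset.sum_eq_single (y + 1)]
    · rw [ih, hX, if_pos rfl, mul_one]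
      simp [add_comm, add_assoc, add_left_comm]
    · intro b _ hb
      rw [hX b, if_neg hb, mul_zero]
    · simp

lemma TW_apply (a : ZMod d × ZMod d) (x y : ZMod d) :
    TW d a x y = if x = y + a.2 then
      eZ d (-((2 : ZMod d)⁻¹ * a.1 * a.2) + a.1 * x) else 0 := by
  unfold TW Zmat
  rw [Matrix.diagonal_pow, Matrix.smul_apply, Matrix.diagonal_mul,
    Xmat_pow_apply, ZMod.natCast_val, ZMod.cast_id]
  rw [Pi.pow_apply, ← pow_mul, smul_eq_mul]
  have hcast : ((x.val * a.1.val : ℕ) : ZMod d) = a.1 * x := by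
    push_cast [ZMod.natCast_val, ZMod.cast_id]; ring
  rw [omega_pow_nat d (x.val * a.1.val), hcast]
  have : omegaC d ^ (-((2 : ZMod d)⁻¹ * a.1 * a.2)).val = eZ d (-((2 : ZMod d)⁻¹ * a.1 * a.2)) := rfl
  rw [this]
  split_ifs <;> simp [← eZ_add]

lemma TW_conjTranspose (hodd : Odd d) (a : ZMod d × ZMod d) :
    (TW d a)ᴴ = TW d (-a) := by
  have h2 : (2 : ZMod d) * (2 : ZMod d)⁻¹ = 1 := by
    apply ZMod.mul_inv_of_unit
    rw [show ((2 : ZMod d)) = ((2 : ℕ) : ZMod d) by norm_cast, ZMod.isUnit_iff_coprime]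
    exact hodd.coprime_two_left
  ext x y
  rw [Matrix.conjTranspose_apply, TW_apply, TW_apply]
  have hcond : (y = x + a.2) ↔ (x = y + (-a).2) := by
    constructor <;> intro h <;> simp [h] <;> ring
  by_cases h : y = x + a.2
  · rw [if_pos h, if_pos (hcond.mp h)]
    rw [Complex.star_def, eZ_conj]
    congr 1
    subst h
    simp only [Prod.fst_neg, Prod.snd_neg]
    linear_combination (a.1 * a.2) * h2
  · rw [if_neg h, if_neg (fun hc => h (hcond.mpr hc))]
    simp

lemma Apoint0_conjTranspose (hodd : Odd d) : (Apoint0 d)ᴴ = Apoint0 d := by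
  unfold Apoint0
  rw [Matrix.conjTranspose_smul, Matrix.conjTranspose_sum]
  congr 1
  · simp [Complex.star_def]
  · rw [show (∑ a : ZMod d × ZMod d, (TW d a)ᴴ) = ∑ a : ZMod d × ZMod d, TW d (-a) by
      exact Finset.sum_congr rfl fun a _ => TW_conjTranspose d hodd a]
    exact Fintype.sum_equiv (Equiv.neg _) _ _ (fun a => by simp)

lemma Apoint_conjTranspose (hodd : Odd d) (u : ZMod d × ZMod d) :
    (Apoint d u)ᴴ = Apoint d u := by
  unfold Apoint
  rw [Matrix.conjTranspose_mul, Matrix.conjTranspose_mul, Matrix.conjTranspose_conjTranspose,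
    Apoint0_conjTranspose d hodd, Matrix.mul_assoc]

end main

/-- The discrete Wigner function of a Hermitian matrix is real-valued. -/
theorem wigner_real_valued (d : ℕ) [NeZero d] (hodd : Odd d) (hd : 1 < d)
    (ρ : Matrix (ZMod d) (ZMod d) ℂ) (hρ : ρᴴ = ρ) (u : ZMod d × ZMod d) :
    ((Apoint d u * ρ).trace).im = 0 := by
  have key : (starRingEnd ℂ) ((Apoint d u * ρ).trace) = (Apoint d u * ρ).trace := by
    rw [show (starRingEnd ℂ) ((Apoint d u * ρ).trace) = star ((Apoint d u * ρ).trace) from rfl,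
      ← Matrix.trace_conjTranspose, Matrix.conjTranspose_mul, hρ,
      Apoint_conjTranspose d hodd, Matrix.trace_mul_comm]
  exact Complex.conj_eq_iff_im.mp key
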